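/- Let n, B be positive integers, Ψ ∈ ℝ^{n×B}, and let 0 < a ≤ b and c₀ > 0 be constants. Suppose: (i) the operator norm bound ‖ΨᵀΨ/n − I_B‖_op ≤ 1/2 holds; (ii) K₀ ∈ ℝ^{n×n} is symmetric with a·I_n ⪯ K₀ ⪯ b·I_n (in the Loewner order); and (iii) Σ ∈ ℝ^{B×B} is a positive definite diagonal matrix with ‖Σ^{-1}‖_op ≤ c₀ n. Then the matrix M = (Σ^{-1}/n + Ψᵀ K₀^{-1} Ψ / n)^{-1} is well defined, symmetric positive definite, and every eigenvalue λ of M satisfies (c₀ + 3/(2a))^{-1} ≤ λ ≤ 2b. -/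

import Mathlib

open Matrix

/-- The ℓ²→ℓ² operator (spectral) norm of a real matrix. -/
noncomputable def l2OpNorm {m n : ℕ} (A : Matrix (Fin m) (Fin n) ℝ) : ℝ :=
  ‖LinearMap.toContinuousLinearMap (Matrix.toEuclideanLin A)‖

lemma l2OpNorm_neg' {m : ℕ} (A : Matrix (Fin m) (Fin m) ℝ) :
    l2OpNorm (-A) = l2OpNorm A := by
  unfold l2OpNorm
  rw [map_neg, map_neg, norm_neg]

lemma quad_le_opNorm' {m : ℕ} (A : Matrix (Fin m) (Fin m) ℝ) (x : Fin m → ℝ) :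
    x ⬝ᵥ (A *ᵥ x) ≤ l2OpNorm A * (x ⬝ᵥ x) := by
  set f := LinearMap.toContinuousLinearMap (Matrix.toEuclideanLin A) with hf
  set x' : EuclideanSpace ℝ (Fin m) := (WithLp.equiv 2 _).symm x with hx'
  have h1 : x ⬝ᵥ (A *ᵥ x) = inner ℝ x' (f x') := by
    simp [hf, hx', Matrix.toEuclideanLin_apply, PiLp.inner_apply, dotProduct,
      RCLike.inner_apply, mul_comm]
  have h2 : inner ℝ x' (f x') ≤ ‖x'‖ * ‖f x'‖ := real_inner_le_norm _ _
  have h3 : ‖f x'‖ ≤ ‖f‖ * ‖x'‖ := f.le_opNorm _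
  have h4 : (x ⬝ᵥ x : ℝ) = ‖x'‖ * ‖x'‖ := by
    have : x ⬝ᵥ x = inner ℝ x' x' := by
      rw [real_inner_self_eq_norm_sq, EuclideanSpace.norm_sq_eq]
      simp only [Real.norm_eq_abs, sq_abs]
      simp [hx', dotProduct, sq]
    rw [this, real_inner_self_eq_norm_mul_norm]
  have h5 : (0:ℝ) ≤ ‖x'‖ := norm_nonneg _
  have h6 : (0:ℝ) ≤ ‖f‖ := norm_nonneg _
  rw [h1, h4]
  unfold l2OpNorm
  rw [← hf]
  nlinarith

lemma dot_mulVec_symm' {m : ℕ} {K : Matrix (Fin m) (Fin m) ℝ} (hK : K.IsSymm)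
    (u w : Fin m → ℝ) : u ⬝ᵥ (K *ᵥ w) = w ⬝ᵥ (K *ᵥ u) := by
  rw [dotProduct_mulVec, ← mulVec_transpose, hK.eq]
  exact dotProduct_comm _ _

lemma dot_cs' {m : ℕ} (u w : Fin m → ℝ) :
    (u ⬝ᵥ w) ^ 2 ≤ (u ⬝ᵥ u) * (w ⬝ᵥ w) := by
  simpa [dotProduct, sq] using Finset.sum_mul_sq_le_sq_mul_sq Finset.univ u w

lemma dot_self_nonneg' {m : ℕ} (v : Fin m → ℝ) : 0 ≤ v ⬝ᵥ v :=
  Finset.sum_nonneg fun i _ => mul_self_nonneg _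

lemma dot_self_pos' {m : ℕ} {v : Fin m → ℝ} (hv : v ≠ 0) : 0 < v ⬝ᵥ v :=
  lt_of_le_of_ne (dot_self_nonneg' v)
    (fun h => hv (dotProduct_self_eq_zero.mp h.symm))

lemma posdef_cs' {m : ℕ} {K : Matrix (Fin m) (Fin m) ℝ} (hK : K.PosDef) (hKs : K.IsSymm)
    (u w : Fin m → ℝ) :
    (u ⬝ᵥ (K *ᵥ w)) ^ 2 ≤ (u ⬝ᵥ (K *ᵥ u)) * (w ⬝ᵥ (K *ᵥ w)) := by
  by_cases hw : w = 0
  · simp [hw]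
  · set α := w ⬝ᵥ (K *ᵥ w) with hα
    set β := u ⬝ᵥ (K *ᵥ w) with hβ
    set γ := u ⬝ᵥ (K *ᵥ u) with hγ
    have hαpos : 0 < α := by simpa using hK.dotProduct_mulVec_pos hw
    have hsymm : w ⬝ᵥ (K *ᵥ u) = β := (dot_mulVec_symm' hKs w u).trans rfl
    have h0 : 0 ≤ (α • u - β • w) ⬝ᵥ (K *ᵥ (α • u - β • w)) := by
      simpa using hK.posSemidef.dotProduct_mulVec_nonneg (α • u - β • w)
    have hexp : (α • u - β • w) ⬝ᵥ (K *ᵥ (α • u - β • w))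
        = α^2 * γ - 2*α*β*β + β^2*α := by
      simp [Matrix.mulVec_sub, Matrix.mulVec_smul, sub_dotProduct,
        dotProduct_sub, smul_dotProduct, dotProduct_smul,
        smul_eq_mul, hsymm, ← hα, ← hβ, ← hγ]
      ring
    rw [hexp] at h0
    nlinarith

lemma isSymm_isHermitian' {m : ℕ} {K : Matrix (Fin m) (Fin m) ℝ} (h : K.IsSymm) :
    K.IsHermitian := by
  rw [Matrix.IsHermitian, conjTranspose_eq_transpose_of_trivial]
  exact h

lemma inv_quad_bounds' {m : ℕ} {K : Matrix (Fin m) (Fin m) ℝ} {a b : ℝ}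
    (ha : 0 < a) (hKs : K.IsSymm)
    (hlow : ∀ x, a * (x ⬝ᵥ x) ≤ x ⬝ᵥ (K *ᵥ x))
    (hup : ∀ x, x ⬝ᵥ (K *ᵥ x) ≤ b * (x ⬝ᵥ x))
    (w : Fin m → ℝ) :
    w ⬝ᵥ w ≤ b * (w ⬝ᵥ (K⁻¹ *ᵥ w)) ∧ a * (w ⬝ᵥ (K⁻¹ *ᵥ w)) ≤ w ⬝ᵥ w := by
  have hK : K.PosDef := by
    refine Matrix.PosDef.of_dotProduct_mulVec_pos (isSymm_isHermitian' hKs) (fun x hx => ?_)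
    have h1 := hlow x
    have h2 := dot_self_pos' hx
    simp only [star_trivial]
    nlinarith
  have hdet : IsUnit K.det := hK.det_pos.ne'.isUnit
  set u := K⁻¹ *ᵥ w with hudef
  have hu : K *ᵥ u = w := by
    rw [hudef, Matrix.mulVec_mulVec, Matrix.mul_nonsing_inv _ hdet, Matrix.one_mulVec]
  set s := w ⬝ᵥ (K⁻¹ *ᵥ w) with hs
  have hsu : s = u ⬝ᵥ w := by rw [hs, ← hudef, dotProduct_comm]
  have hsK : s = u ⬝ᵥ (K *ᵥ u) := by rw [hsu, ← hu]
  have hβ : u ⬝ᵥ (K *ᵥ w) = w ⬝ᵥ w := by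
    rw [dot_mulVec_symm' hKs, hu]
  have hsnn : 0 ≤ s := by
    rw [hsK]
    exact le_trans (mul_nonneg ha.le (dot_self_nonneg' u)) (hlow u)
  constructor
  · by_cases hw : w = 0
    · simp [hw, hs]
    · have hq : 0 < w ⬝ᵥ w := dot_self_pos' hw
      have hcs := posdef_cs' hK hKs u w
      rw [hβ, ← hsK] at hcs
      have hα : w ⬝ᵥ (K *ᵥ w) ≤ b * (w ⬝ᵥ w) := hup w
      have hαnn : 0 ≤ w ⬝ᵥ (K *ᵥ w) :=
        le_trans (mul_nonneg ha.le (dot_self_nonneg' w)) (hlow w)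
      nlinarith
  · have h1 : a * (u ⬝ᵥ u) ≤ u ⬝ᵥ w := by
      have := hlow u; rwa [hu] at this
    have hcs := dot_cs' u w
    have hp : 0 ≤ u ⬝ᵥ u := dot_self_nonneg' u
    have hq : 0 ≤ w ⬝ᵥ w := dot_self_nonneg' w
    rw [hsu]
    rcases le_or_gt (u ⬝ᵥ w) 0 with h|h
    · nlinarith
    · nlinarith [mul_le_mul_of_nonneg_left h1 hq, mul_le_mul_of_nonneg_left hcs ha.le]

lemma eigen_arith {a b c₀ lam q : ℝ} (ha : 0 < a) (hb : 0 < b) (hc₀ : 0 < c₀)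
    (hq : 0 < q) (hlamne : lam ≠ 0)
    (e1 : q ≤ 2*b*(lam⁻¹*q)) (e2 : 2*a*(lam⁻¹*q) ≤ (2*a*c₀+3)*q) :
    (c₀ + 3/(2*a))⁻¹ ≤ lam ∧ lam ≤ 2*b := by
  have hkey1 : 1 ≤ 2*b*lam⁻¹ := by nlinarith
  have hkey2 : 2*a*lam⁻¹ ≤ 2*a*c₀ + 3 := by nlinarith
  have hinvpos : 0 < lam⁻¹ := by nlinarith
  have hlam : 0 < lam := inv_pos.mp hinvpos
  have hmul : lam * lam⁻¹ = 1 := mul_inv_cancel₀ hlamne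
  constructor
  · have key : lam⁻¹ ≤ c₀ + 3/(2*a) := by
      have h7 : lam⁻¹ ≤ (2*a*c₀+3)/(2*a) := by
        rw [le_div_iff₀ (by positivity)]
        nlinarith
      have h8 : c₀ + 3/(2*a) = (2*a*c₀+3)/(2*a) := by
        field_simp
      rw [h8]
      exact h7
    calc (c₀ + 3/(2*a))⁻¹ ≤ (lam⁻¹)⁻¹ := inv_anti₀ hinvpos key
      _ = lam := inv_inv lam
  · nlinarith

/-- Bounds on the eigenvalues of `M = (Σ⁻¹/n + Ψᵀ K₀⁻¹ Ψ/n)⁻¹` when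
`‖ΨᵀΨ/n − I‖_op ≤ 1/2`, `a I ⪯ K₀ ⪯ b I` with `K₀` symmetric, and `Σ` is a positive
definite diagonal matrix with `‖Σ⁻¹‖_op ≤ c₀ n`. -/
theorem statement10 (n B : ℕ) (hn : 0 < n) (hB : 0 < B)
    (Ψ : Matrix (Fin n) (Fin B) ℝ)
    (a b c₀ : ℝ) (ha : 0 < a) (hab : a ≤ b) (hc₀ : 0 < c₀)
    (hΨ : l2OpNorm ((n : ℝ)⁻¹ • (Ψᵀ * Ψ) - 1) ≤ 1 / 2)
    (K₀ : Matrix (Fin n) (Fin n) ℝ) (hK₀symm : K₀.IsSymm)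
    (hK₀low : (K₀ - a • (1 : Matrix (Fin n) (Fin n) ℝ)).PosSemidef)
    (hK₀up : (b • (1 : Matrix (Fin n) (Fin n) ℝ) - K₀).PosSemidef)
    (S : Matrix (Fin B) (Fin B) ℝ) (hSdiag : S.IsDiag) (hSpos : S.PosDef)
    (hSinv : l2OpNorm S⁻¹ ≤ c₀ * n)
    (M : Matrix (Fin B) (Fin B) ℝ)
    (hM : M = ((n : ℝ)⁻¹ • S⁻¹ + (n : ℝ)⁻¹ • (Ψᵀ * K₀⁻¹ * Ψ))⁻¹) :
    ((n : ℝ)⁻¹ • S⁻¹ + (n : ℝ)⁻¹ • (Ψᵀ * K₀⁻¹ * Ψ)).PosDef ∧ M.PosDef ∧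
      ∀ (lam : ℝ) (v : Fin B → ℝ), v ≠ 0 → M *ᵥ v = lam • v →
        (c₀ + 3 / (2 * a))⁻¹ ≤ lam ∧ lam ≤ 2 * b := by
  have hb : 0 < b := lt_of_lt_of_le ha hab
  have hnR : (0:ℝ) < n := by exact_mod_cast hn
  have hninv : (0:ℝ) < (n:ℝ)⁻¹ := by positivity
  set A := (n : ℝ)⁻¹ • S⁻¹ + (n : ℝ)⁻¹ • (Ψᵀ * K₀⁻¹ * Ψ) with hA
  -- quadratic form bounds for K₀
  have hKlow : ∀ x, a * (x ⬝ᵥ x) ≤ x ⬝ᵥ (K₀ *ᵥ x) := by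
    intro x
    have h := hK₀low.dotProduct_mulVec_nonneg x
    simp only [star_trivial, Matrix.sub_mulVec, Matrix.smul_mulVec,
      Matrix.one_mulVec, dotProduct_sub, dotProduct_smul,
      smul_eq_mul] at h
    linarith
  have hKup : ∀ x, x ⬝ᵥ (K₀ *ᵥ x) ≤ b * (x ⬝ᵥ x) := by
    intro x
    have h := hK₀up.dotProduct_mulVec_nonneg x
    simp only [star_trivial, Matrix.sub_mulVec, Matrix.smul_mulVec,
      Matrix.one_mulVec, dotProduct_sub, dotProduct_smul,
      smul_eq_mul] at h
    linarith
  have hKinv := inv_quad_bounds' ha hK₀symm hKlow hKup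
  -- quadratic form bounds for the Ψ part
  have hXval : ∀ x : Fin B → ℝ,
      x ⬝ᵥ (((n : ℝ)⁻¹ • (Ψᵀ * Ψ)) *ᵥ x) = (n:ℝ)⁻¹ * ((Ψ *ᵥ x) ⬝ᵥ (Ψ *ᵥ x)) := by
    intro x
    rw [Matrix.smul_mulVec, dotProduct_smul, smul_eq_mul,
      ← Matrix.mulVec_mulVec, Matrix.dotProduct_mulVec, Matrix.vecMul_transpose]
  have hΨlow : ∀ x : Fin B → ℝ, (1/2) * (x ⬝ᵥ x) ≤ (n:ℝ)⁻¹ * ((Ψ *ᵥ x) ⬝ᵥ (Ψ *ᵥ x)) := by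
    intro x
    set D := (n : ℝ)⁻¹ • (Ψᵀ * Ψ) - 1 with hD
    have hneg : l2OpNorm (-D) ≤ 1/2 := by rw [l2OpNorm_neg']; exact hΨ
    have h2 := (quad_le_opNorm' (-D) x).trans
      (mul_le_mul_of_nonneg_right hneg (dot_self_nonneg' x))
    have hexp : x ⬝ᵥ ((-D) *ᵥ x)
        = x ⬝ᵥ x - x ⬝ᵥ (((n : ℝ)⁻¹ • (Ψᵀ * Ψ)) *ᵥ x) := by
      rw [hD, Matrix.neg_mulVec, dotProduct_neg, Matrix.sub_mulVec,
        dotProduct_sub, Matrix.one_mulVec]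
      ring
    rw [hexp, hXval x] at h2
    linarith
  have hΨup : ∀ x : Fin B → ℝ, (n:ℝ)⁻¹ * ((Ψ *ᵥ x) ⬝ᵥ (Ψ *ᵥ x)) ≤ (3/2) * (x ⬝ᵥ x) := by
    intro x
    have h2 := (quad_le_opNorm' ((n : ℝ)⁻¹ • (Ψᵀ * Ψ) - 1) x).trans
      (mul_le_mul_of_nonneg_right hΨ (dot_self_nonneg' x))
    have hexp : x ⬝ᵥ (((n : ℝ)⁻¹ • (Ψᵀ * Ψ) - 1) *ᵥ x)
        = x ⬝ᵥ (((n : ℝ)⁻¹ • (Ψᵀ * Ψ)) *ᵥ x) - x ⬝ᵥ x := by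
      rw [Matrix.sub_mulVec, dotProduct_sub, Matrix.one_mulVec]
    rw [hexp, hXval x] at h2
    linarith
  -- S⁻¹ quadratic form bounds
  have hSlow : ∀ x : Fin B → ℝ, 0 ≤ x ⬝ᵥ (S⁻¹ *ᵥ x) := by
    intro x
    simpa using hSpos.inv.posSemidef.dotProduct_mulVec_nonneg x
  have hSup : ∀ x : Fin B → ℝ, x ⬝ᵥ (S⁻¹ *ᵥ x) ≤ c₀ * n * (x ⬝ᵥ x) :=
    fun x => (quad_le_opNorm' _ x).trans
      (mul_le_mul_of_nonneg_right hSinv (dot_self_nonneg' x))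
  -- value of the quadratic form of A
  have hAval : ∀ x : Fin B → ℝ, x ⬝ᵥ (A *ᵥ x)
      = (n:ℝ)⁻¹ * (x ⬝ᵥ (S⁻¹ *ᵥ x))
        + (n:ℝ)⁻¹ * ((Ψ *ᵥ x) ⬝ᵥ (K₀⁻¹ *ᵥ (Ψ *ᵥ x))) := by
    intro x
    rw [hA, Matrix.add_mulVec, dotProduct_add, Matrix.smul_mulVec,
      Matrix.smul_mulVec, dotProduct_smul, dotProduct_smul,
      smul_eq_mul, smul_eq_mul]
    congr 1
    congr 1
    rw [Matrix.mul_assoc, ← Matrix.mulVec_mulVec, ← Matrix.mulVec_mulVec,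
      Matrix.dotProduct_mulVec, Matrix.vecMul_transpose]
  -- main bounds for A
  have hAlow : ∀ x : Fin B → ℝ, x ⬝ᵥ x ≤ (2*b) * (x ⬝ᵥ (A *ᵥ x)) := by
    intro x
    rw [hAval x]
    have h1 := (hKinv (Ψ *ᵥ x)).1
    have h2 := hΨlow x
    have h3 := hSlow x
    have h4 : (n:ℝ)⁻¹ * ((Ψ *ᵥ x) ⬝ᵥ (Ψ *ᵥ x))
        ≤ (n:ℝ)⁻¹ * (b * ((Ψ *ᵥ x) ⬝ᵥ (K₀⁻¹ *ᵥ (Ψ *ᵥ x)))) :=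
      mul_le_mul_of_nonneg_left h1 hninv.le
    nlinarith [mul_nonneg (mul_nonneg hb.le hninv.le) h3]
  have hAup : ∀ x : Fin B → ℝ, (2*a) * (x ⬝ᵥ (A *ᵥ x)) ≤ (2*a*c₀ + 3) * (x ⬝ᵥ x) := by
    intro x
    rw [hAval x]
    have h1 := (hKinv (Ψ *ᵥ x)).2
    have h2 := hΨup x
    have h3 := hSup x
    have h4 : (n:ℝ)⁻¹ * (x ⬝ᵥ (S⁻¹ *ᵥ x)) ≤ (n:ℝ)⁻¹ * (c₀ * n * (x ⬝ᵥ x)) :=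
      mul_le_mul_of_nonneg_left h3 hninv.le
    have h5 : (n:ℝ)⁻¹ * (c₀ * n * (x ⬝ᵥ x)) = c₀ * (x ⬝ᵥ x) := by
      field_simp
    have h6 : a * ((n:ℝ)⁻¹ * ((Ψ *ᵥ x) ⬝ᵥ (K₀⁻¹ *ᵥ (Ψ *ᵥ x))))
        ≤ (n:ℝ)⁻¹ * ((Ψ *ᵥ x) ⬝ᵥ (Ψ *ᵥ x)) := by
      have := mul_le_mul_of_nonneg_left h1 hninv.le
      nlinarith
    nlinarith
  -- symmetry of A
  have hAsymm : A.IsSymm := by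
    have hS : S⁻¹ᵀ = S⁻¹ := by
      rw [Matrix.transpose_nonsing_inv, hSdiag.isSymm.eq]
    have hKi : K₀⁻¹ᵀ = K₀⁻¹ := by
      rw [Matrix.transpose_nonsing_inv, hK₀symm.eq]
    unfold Matrix.IsSymm
    rw [hA, Matrix.transpose_add, Matrix.transpose_smul, Matrix.transpose_smul,
      Matrix.transpose_mul, Matrix.transpose_mul, Matrix.transpose_transpose,
      hS, hKi, Matrix.mul_assoc]
  have hApos : A.PosDef := by
    refine Matrix.PosDef.of_dotProduct_mulVec_pos (isSymm_isHermitian' hAsymm) (fun x hx => ?_)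
    have h1 := hAlow x
    have h2 := dot_self_pos' hx
    simp only [star_trivial]
    nlinarith
  refine ⟨hApos, hM ▸ hApos.inv, ?_⟩
  intro lam v hv hMv
  have hdetA : IsUnit A.det := hApos.det_pos.ne'.isUnit
  have hAv : A *ᵥ (M *ᵥ v) = v := by
    rw [hM, Matrix.mulVec_mulVec, Matrix.mul_nonsing_inv _ hdetA, Matrix.one_mulVec]
  rw [hMv, Matrix.mulVec_smul] at hAv
  have hlamne : lam ≠ 0 := by
    rintro rfl
    rw [zero_smul] at hAv
    exact hv hAv.symm
  have hAv' : A *ᵥ v = lam⁻¹ • v := by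
    have h := congrArg (fun y => lam⁻¹ • y) hAv
    simpa [smul_smul, inv_mul_cancel₀ hlamne] using h
  have hvv := dot_self_pos' hv
  have hquad : v ⬝ᵥ (A *ᵥ v) = lam⁻¹ * (v ⬝ᵥ v) := by
    rw [hAv', dotProduct_smul, smul_eq_mul]
  have e1 := hAlow v
  have e2 := hAup v
  rw [hquad] at e1 e2
  exact eigen_arith ha hb hc₀ hvv hlamne e1 e2
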